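/- Let B ⊑ B̂ be a fragment extension of bridges satisfying weak monotonicity (wm), and let ι be an interpretation for B̂ restricting to one for B (so (B, B̂, ι) is an arch). Then for all sets of sentences R, R' ⊆ L̂₁: if (T₁ ∪ R)^⊢ ∩ L₁ ⊆ (T₁ ∪ R')^⊢ ∩ L₁, then (T₂ ∪ ιR)^⊢ ∩ L₂ ⊆ (T₂ ∪ ιR')^⊢ ∩ L₂. -/
import Mathlib


open FirstOrder Set

universe u v w u₁ v₁ u₂ v₂

namespace PaperStmt

/-- An `𝔏`-fragment: a set of `𝔏`-sentences containing `⊤` and `⊥` and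
closed under `∧` and `∨`. -/
def IsFragment {L : FirstOrder.Language.{u, v}} (F : Set L.Sentence) : Prop :=
  (⊤ : L.Sentence) ∈ F ∧ (⊥ : L.Sentence) ∈ F ∧
    ∀ φ ψ : L.Sentence, φ ∈ F → ψ ∈ F → (φ ⊓ ψ) ∈ F ∧ (φ ⊔ ψ) ∈ F

/-- `T_F = T^⊢ ∩ F`: the consequences of the theory `T` that lie in the fragment `F`. -/
def cons {L : FirstOrder.Language.{u, v}} (T : L.Theory) (F : Set L.Sentence) :
    Set L.Sentence :=
  {φ | φ ∈ F ∧ T ⊨ᵇ φ}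

/-- Bundled models of `T` (in the universe matching semantic consequence `⊨ᵇ`). -/
abbrev Mod {L : FirstOrder.Language.{u, v}} (T : L.Theory) : Type (max u v + 1) :=
  FirstOrder.Language.Theory.ModelType.{u, v, max u v} T

/-- `Th_F(M)`: the sentences in the fragment `F` true in the model `M`. -/
def th {L : FirstOrder.Language.{u, v}} {T : L.Theory} (F : Set L.Sentence) (M : Mod T) :
    Set L.Sentence :=
  {φ | φ ∈ F ∧ M ⊨ φ}

/-- A fragment is closed under finite disjunctions (as `List.foldr`). -/
lemma foldr_sup_mem_of_fragment {L : FirstOrder.Language.{u, v}} {F : Set L.Sentence}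
    (hF : IsFragment F) : ∀ l : List L.Sentence, (∀ ψ ∈ l, ψ ∈ F) →
      l.foldr (· ⊔ ·) ⊥ ∈ F := by
  intro l
  induction l with
  | nil => intro _; exact hF.2.1
  | cons a l ih =>
    intro hl
    exact (hF.2.2 a (l.foldr (· ⊔ ·) ⊥) (hl a (by simp))
      (ih fun ψ hψ => hl ψ (by simp [hψ]))).2

lemma sentence_realize_foldr_sup {L : FirstOrder.Language.{u, v}} {M : Type w} [L.Structure M]
    (l : List L.Sentence) : M ⊨ l.foldr (· ⊔ ·) ⊥ ↔ ∃ ψ ∈ l, M ⊨ ψ := by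
  induction l with
  | nil => simp [Language.Sentence.Realize, Language.Formula.Realize]
  | cons a l ih =>
    simp only [List.foldr_cons, List.mem_cons]
    constructor
    · intro hs
      have := Language.BoundedFormula.realize_sup.1 hs
      rcases this with h1 | h1
      · exact ⟨a, Or.inl rfl, h1⟩
      · rcases ih.1 h1 with ⟨ψ, hψ, h⟩; exact ⟨ψ, Or.inr hψ, h⟩
    · rintro ⟨ψ, (rfl | hψ), h⟩
      · exact Language.BoundedFormula.realize_sup.2 (Or.inl h)
      · exact Language.BoundedFormula.realize_sup.2 (Or.inr (ih.2 ⟨ψ, hψ, h⟩))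

lemma not_injective {L : FirstOrder.Language.{u, v}} :
    Function.Injective (FirstOrder.Language.Formula.not : L.Sentence → L.Sentence) := by
  intro a b hab
  simpa [FirstOrder.Language.Formula.not, FirstOrder.Language.BoundedFormula.not] using hab

/-- let `(B, B̂, ι)` be an arch (a fragment extension `B ⊑ B̂` of bridges with an
interpretation `ι` for `B̂` restricting to one for `B`) satisfying weak monotonicity (wm).
Then for all `R, R' ⊆ L̂₁`: if `(T₁ ∪ R)^⊢ ∩ L₁ ⊆ (T₁ ∪ R')^⊢ ∩ L₁` then
`(T₂ ∪ ιR)^⊢ ∩ L₂ ⊆ (T₂ ∪ ιR')^⊢ ∩ L₂`. -/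
theorem statement_7 {L₁ : FirstOrder.Language.{u₁, v₁}} {L₂ : FirstOrder.Language.{u₂, v₂}}
    {F₁ Fh₁ : Set L₁.Sentence} {F₂ Fh₂ : Set L₂.Sentence} {T₁ : L₁.Theory} {T₂ : L₂.Theory}
    (hF₁ : IsFragment F₁) (hF₂ : IsFragment F₂) (hFh₁ : IsFragment Fh₁) (hFh₂ : IsFragment Fh₂)
    (hsub₁ : F₁ ⊆ Fh₁) (hsub₂ : F₂ ⊆ Fh₂)
    (σ : Mod T₂ → Mod T₁)
    (ι : L₁.Sentence → L₂.Sentence)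
    (hιFh : ∀ φ ∈ Fh₁, ι φ ∈ Fh₂) (hιF : ∀ φ ∈ F₁, ι φ ∈ F₂)
    (hι : ∀ φ ∈ Fh₁, ∀ M : Mod T₂, (σ M ⊨ φ ↔ M ⊨ ι φ))
    (hwm : ∀ (M : Mod T₂) (N : Mod T₁), th F₁ N ⊆ th F₁ (σ M) →
      ∃ M' : Mod T₂, th Fh₁ (σ M') = th Fh₁ N ∧ th F₂ M' ⊆ th F₂ M)
    (R R' : Set L₁.Sentence) (hR : R ⊆ Fh₁) (hR' : R' ⊆ Fh₁)
    (h : cons (T₁ ∪ R) F₁ ⊆ cons (T₁ ∪ R') F₁) :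
    cons (T₂ ∪ ι '' R) F₂ ⊆ cons (T₂ ∪ ι '' R') F₂ := by
  classical
  rintro φ ⟨hφF, hφ⟩
  refine ⟨hφF, ?_⟩
  rw [Language.Theory.models_sentence_iff]
  intro M₀
  -- Build the model `M` of `T₂` with the same carrier as `M₀`.
  have hM₀ : M₀ ⊨ T₂ ∪ ι '' R' := M₀.is_model
  rw [Language.Theory.model_union_iff] at hM₀
  letI : T₂.Model M₀ := hM₀.1
  let M : Mod T₂ := Language.Theory.ModelType.of T₂ M₀
  -- `σ M` satisfies `R'`.
  have hσMR' : ∀ r ∈ R', σ M ⊨ r := by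
    intro r hr
    rw [hι r (hR' hr) M]
    exact hM₀.2.realize_of_mem (ι r) (Set.mem_image_of_mem ι hr)
  -- The key satisfiable theory: `T₁ ∪ R` plus negations of `F₁`-sentences false in `σ M`.
  set D : Set L₁.Sentence := {ψ | ψ ∈ F₁ ∧ ¬ σ M ⊨ ψ} with hD
  have hSsat : (T₁ ∪ R ∪ Language.Formula.not '' D).IsSatisfiable := by
    rw [Language.Theory.isSatisfiable_iff_isFinitelySatisfiable]
    intro t ht
    by_contra htsat
    -- collect the elements of `D` whose negations appear in `t`
    have hfin : {ψ ∈ D | ψ.not ∈ (t : Set L₁.Sentence)}.Finite :=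
      ((t.finite_toSet.preimage (not_injective.injOn)).subset (fun ψ hψ => hψ.2) : _)
    set l : List L₁.Sentence := hfin.toFinset.toList with hl
    have hmem_l : ∀ ψ, ψ ∈ l ↔ ψ ∈ D ∧ ψ.not ∈ (t : Set L₁.Sentence) := by
      intro ψ
      rw [hl, Finset.mem_toList, Set.Finite.mem_toFinset]
      exact Iff.rfl
    -- `T₁ ∪ R` entails the disjunction of `l`
    have hdisj : (T₁ ∪ R) ⊨ᵇ l.foldr (· ⊔ ·) ⊥ := by
      rw [Language.Theory.models_sentence_iff]
      intro K
      by_contra hK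
      apply htsat
      have hKt : K ⊨ (t : L₁.Theory) := by
        refine ⟨fun χ hχ => ?_⟩
        rcases ht hχ with hχ' | hχ'
        · exact Language.Theory.realize_sentence_of_mem (T₁ ∪ R) hχ'
        · rcases hχ' with ⟨ψ, hψD, rfl⟩
          rw [Language.Sentence.realize_not]
          intro hKψ
          apply hK
          exact (sentence_realize_foldr_sup l).2 ⟨ψ, (hmem_l ψ).2 ⟨hψD, hχ⟩, hKψ⟩
      letI := hKt
      exact Language.Theory.Model.isSatisfiable K
    -- the disjunction is in `F₁`
    have hlF : l.foldr (· ⊔ ·) ⊥ ∈ F₁ :=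
      foldr_sup_mem_of_fragment hF₁ l (fun ψ hψ => ((hmem_l ψ).1 hψ).1.1)
    -- so `T₁ ∪ R'` entails it, hence `σ M` realizes it
    have hdisj' : (T₁ ∪ R') ⊨ᵇ l.foldr (· ⊔ ·) ⊥ := (h ⟨hlF, hdisj⟩).2
    have hσMT : σ M ⊨ T₁ ∪ R' := by
      rw [Language.Theory.model_union_iff]
      exact ⟨(σ M).is_model, ⟨fun r hr => hσMR' r hr⟩⟩
    have hσMl : σ M ⊨ l.foldr (· ⊔ ·) ⊥ := by
      have := Language.Theory.models_sentence_iff.1 hdisj'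
        (@Language.Theory.ModelType.of _ _ (σ M) _ hσMT _)
      exact this
    rcases (sentence_realize_foldr_sup l).1 hσMl with ⟨ψ, hψl, hψ⟩
    exact ((hmem_l ψ).1 hψl).1.2 hψ
  -- extract a model `N` of `T₁ ∪ R` with `th F₁ N ⊆ th F₁ (σ M)`
  obtain ⟨N₀⟩ := hSsat
  have hN₀ : N₀ ⊨ T₁ ∪ R ∪ Language.Formula.not '' D := N₀.is_model
  rw [Language.Theory.model_union_iff, Language.Theory.model_union_iff] at hN₀
  letI : T₁.Model N₀ := hN₀.1.1
  let N : Mod T₁ := Language.Theory.ModelType.of T₁ N₀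
  have hNR : ∀ r ∈ R, N ⊨ r := fun r hr => hN₀.1.2.realize_of_mem r hr
  have hNF₁ : th F₁ N ⊆ th F₁ (σ M) := by
    rintro ψ ⟨hψF, hψN⟩
    refine ⟨hψF, ?_⟩
    by_contra hψM
    have : N ⊨ ψ.not := hN₀.2.realize_of_mem ψ.not ⟨ψ, ⟨hψF, hψM⟩, rfl⟩
    exact ((Language.Sentence.realize_not _).1 this) hψN
  -- apply weak monotonicity
  obtain ⟨M', hM'₁, hM'₂⟩ := hwm M N hNF₁
  -- `M'` models `T₂ ∪ ι '' R`
  have hM'R : ∀ r ∈ R, M' ⊨ ι r := by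
    intro r hr
    rw [← hι r (hR hr) M']
    have : r ∈ th Fh₁ (σ M') := hM'₁ ▸ (⟨hR hr, hNR r hr⟩ : r ∈ th Fh₁ N)
    exact this.2
  have hM'T : M' ⊨ T₂ ∪ ι '' R := by
    rw [Language.Theory.model_union_iff]
    refine ⟨M'.is_model, ⟨?_⟩⟩
    rintro χ ⟨r, hr, rfl⟩
    exact hM'R r hr
  -- hence `M' ⊨ φ`, so `M ⊨ φ`
  have hM'φ : M' ⊨ φ :=
    Language.Theory.models_sentence_iff.1 hφ
      (@Language.Theory.ModelType.of _ _ M' _ hM'T _)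
  exact (hM'₂ ⟨hφF, hM'φ⟩).2

end PaperStmt
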